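/- arXiv:1811.07448 — 5 statements merged into one kernel-verified Lean document; each statement's English description precedes it below -/
import Mathlib

section
/- Let G ∈ G(n,d,k,w) be the grid induced by the (n,w)-interval partition I = (I_1,...,I_t), and for 1 ≤ i ≤ t set Ī_i = I_i ∪ I_{i+1}[:k−1] and ∂I_i = I_i[:k−1] ∪ I_{i+1}[:k−1], where I_{t+1} = ∅. Then every G-block B has the form B = ∏_{j=1}^d I_{i_j}[k:] for some (not necessarily distinct) indices i_1,...,i_d ∈ [t]; moreover its closure is B̄ = ∏_{j=1}^d Ī_{i_j} and its boundary is ∂B = ⋃_{j=1}^d Ī_{i_1} × ... × Ī_{i_{j−1}} × ∂I_{i_j} × Ī_{i_{j+1}} × ... × Ī_{i_d}. -/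
open Finset

/-- `I[:ℓ]`: the set of the `ℓ` smallest elements of `I` (or `I` itself if `|I| < ℓ`). -/
def takeSmallest (I : Finset ℕ) (ℓ : ℕ) : Finset ℕ :=
  I.filter fun x => (I.filter fun y => y ≤ x).card ≤ ℓ

/-- `I[ℓ+1:] = I \ I[:ℓ]`. -/
def dropSmallest (I : Finset ℕ) (ℓ : ℕ) : Finset ℕ :=
  I \ takeSmallest I ℓ

/-- An `(n,w)`-interval partition: a partition of `[n] = {1,…,n}` into consecutive,
pairwise disjoint intervals `I_1, …, I_t`, each of size `w` or `w+1`, where for `j < j'`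
every element of `I j` is smaller than every element of `I j'`. -/
structure IntervalPartition (n w : ℕ) where
  t : ℕ
  I : Fin t → Finset ℕ
  interval : ∀ j, ∃ a b, 1 ≤ a ∧ a ≤ b ∧ b ≤ n ∧ I j = Finset.Icc a b
  size : ∀ j, (I j).card = w ∨ (I j).card = w + 1
  cover : ∀ x ∈ Finset.Icc 1 n, ∃ j, x ∈ I j
  ordered : ∀ j j' : Fin t, j < j' → ∀ x ∈ I j, ∀ y ∈ I j', x < y

/-- The hypergrid `[n]^d`, as a set of tuples. -/
def cube (n d : ℕ) : Set (Fin d → ℕ) :=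
  {x | ∀ i, 1 ≤ x i ∧ x i ≤ n}

/-- The `(n,d,k,w)`-grid induced by an `(n,w)`-interval partition. -/
def gridOf (n d k w : ℕ) (P : IntervalPartition n w) : Set (Fin d → ℕ) :=
  {x ∈ cube n d | ∃ i : Fin d, ∃ j : Fin P.t, x i ∈ takeSmallest (P.I j) (k - 1)}

/-- `G ∈ 𝒢(n,d,k,w)`: `G` is the grid induced by some `(n,w)`-interval partition. -/
def IsGrid (n d k w : ℕ) (G : Set (Fin d → ℕ)) : Prop :=
  ∃ P : IntervalPartition n w, G = gridOf n d k w P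

/-- Two entries of `[n]^d` are neighbors if `∑ i, |x i − y i| = 1`. -/
def Neighbor {d : ℕ} (x y : Fin d → ℕ) : Prop :=
  (∑ i, Nat.dist (x i) (y i)) = 1

/-- A `G`-block: a connected component of the neighborhood graph on `[n]^d \ G`. -/
def IsBlock (n d : ℕ) (G B : Set (Fin d → ℕ)) : Prop :=
  B.Nonempty ∧ B ⊆ cube n d \ G ∧
    (∀ x ∈ B, ∀ y ∈ B,
      Relation.ReflTransGen
        (fun a b => a ∈ cube n d \ G ∧ b ∈ cube n d \ G ∧ Neighbor a b) x y) ∧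
    (∀ x ∈ B, ∀ y, y ∈ cube n d \ G → Neighbor x y → y ∈ B)

/-- The closure `B̄` of a block `B`. -/
def blockClosure (n d k : ℕ) (B : Set (Fin d → ℕ)) : Set (Fin d → ℕ) :=
  {x ∈ cube n d | ∃ y ∈ B, ∀ i, Nat.dist (x i) (y i) < k}

/-- The boundary `∂B = B̄ \ B` of a block `B`. -/
def blockBoundary (n d k : ℕ) (B : Set (Fin d → ℕ)) : Set (Fin d → ℕ) :=
  blockClosure n d k B \ B

/-- The first `k-1` elements of the interval following `I j` (empty if `I j` is last). -/
def nextTake {n w : ℕ} (P : IntervalPartition n w) (k : ℕ) (j : Fin P.t) : Finset ℕ :=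
  if h : (j : ℕ) + 1 < P.t then takeSmallest (P.I ⟨(j : ℕ) + 1, h⟩) (k - 1) else ∅

/-- `Ī_j = I_j ∪ I_{j+1}[:k−1]` (with `I_{t+1} = ∅`). -/
def Ibar {n w : ℕ} (P : IntervalPartition n w) (k : ℕ) (j : Fin P.t) : Finset ℕ :=
  P.I j ∪ nextTake P k j

/-- `∂I_j = I_j[:k−1] ∪ I_{j+1}[:k−1]` (with `I_{t+1} = ∅`). -/
def Ibd {n w : ℕ} (P : IntervalPartition n w) (k : ℕ) (j : Fin P.t) : Finset ℕ :=
  takeSmallest (P.I j) (k - 1) ∪ nextTake P k j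

/- ######### auxiliary lemmas ######### -/

lemma mem_take_Icc {a b ℓ x : ℕ} :
    x ∈ takeSmallest (Finset.Icc a b) ℓ ↔ a ≤ x ∧ x ≤ b ∧ x + 1 ≤ a + ℓ := by
  unfold takeSmallest
  rw [Finset.mem_filter, Finset.mem_Icc]
  have h : (Finset.Icc a b).filter (fun y => y ≤ x) = Finset.Icc a (min b x) := by
    ext y; simp [Finset.mem_filter]; omega
  rw [h, Nat.card_Icc]
  omega

lemma mem_drop_Icc {a b ℓ x : ℕ} :
    x ∈ dropSmallest (Finset.Icc a b) ℓ ↔ a + ℓ ≤ x ∧ x ≤ b := by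
  unfold dropSmallest
  rw [Finset.mem_sdiff, Finset.mem_Icc, mem_take_Icc]
  omega

lemma neighbor_exists {d : ℕ} {x y : Fin d → ℕ}
    (h : (∑ i, Nat.dist (x i) (y i)) = 1) :
    ∃ i0, Nat.dist (x i0) (y i0) = 1 ∧ ∀ i, i ≠ i0 → x i = y i := by
  have hne : ¬ ∀ i, Nat.dist (x i) (y i) = 0 := by
    intro hall
    rw [Finset.sum_eq_zero (fun i _ => hall i)] at h
    omega
  push_neg at hne
  obtain ⟨i0, hi0⟩ := hne
  have hle : ∀ i, Nat.dist (x i) (y i) ≤ 1 := by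
    intro i
    calc Nat.dist (x i) (y i) ≤ ∑ i, Nat.dist (x i) (y i) :=
      Finset.single_le_sum (f := fun i => Nat.dist (x i) (y i)) (fun _ _ => Nat.zero_le _) (Finset.mem_univ i)
    _ = 1 := h
  refine ⟨i0, by have := hle i0; omega, fun i hi => ?_⟩
  have hsub : ({i, i0} : Finset (Fin d)) ⊆ Finset.univ := Finset.subset_univ _
  have h2 : Nat.dist (x i) (y i) + Nat.dist (x i0) (y i0) ≤ 1 := by
    have := Finset.sum_le_sum_of_subset (f := fun i => Nat.dist (x i) (y i)) hsub
    rw [Finset.sum_pair hi, h] at this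
    exact this
  exact Nat.eq_of_dist_eq_zero (by omega)

lemma connect_aux {d : ℕ} (lo hi : Fin d → ℕ) :
    ∀ N (x y : Fin d → ℕ), (∑ i, Nat.dist (x i) (y i)) ≤ N →
    (∀ j, lo j ≤ x j ∧ x j ≤ hi j) → (∀ j, lo j ≤ y j ∧ y j ≤ hi j) →
    Relation.ReflTransGen (fun u v => (∀ j, lo j ≤ u j ∧ u j ≤ hi j) ∧
      (∀ j, lo j ≤ v j ∧ v j ≤ hi j) ∧ Neighbor u v) x y := by
  intro N
  induction N with
  | zero =>
    intro x y hsum hx hy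
    have : ∀ i, Nat.dist (x i) (y i) = 0 := by
      intro i
      have h1 : Nat.dist (x i) (y i) ≤ ∑ i, Nat.dist (x i) (y i) := by
        simpa using Finset.single_le_sum (f := fun i => Nat.dist (x i) (y i))
          (fun _ _ => Nat.zero_le _) (Finset.mem_univ i)
      omega
    have : x = y := funext fun i => Nat.eq_of_dist_eq_zero (this i)
    rw [this]
  | succ N ih =>
    intro x y hsum hx hy
    by_cases hxy : x = y
    · rw [hxy]
    · have hne : ∃ i0, x i0 ≠ y i0 := by
        by_contra hc
        push_neg at hc
        exact hxy (funext hc)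
      obtain ⟨i0, hi0⟩ := hne
      set c : ℕ := if x i0 < y i0 then x i0 + 1 else x i0 - 1 with hc
      set x' : Fin d → ℕ := Function.update x i0 c with hx'
      have hxi0 : x' i0 = c := Function.update_self i0 c x
      have hxo : ∀ i, i ≠ i0 → x' i = x i := fun i hi => Function.update_of_ne hi c x
      have hx'box : ∀ j, lo j ≤ x' j ∧ x' j ≤ hi j := by
        intro j
        by_cases hj : j = i0
        · subst hj
          rw [hxi0, hc]
          have h1 := hx j; have h2 := hy j
          split <;> omega
        · rw [hxo j hj]; exact hx j
      have hd0 : Nat.dist (x i0) (x' i0) = 1 := by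
        rw [hxi0, hc]; simp [Nat.dist]; split <;> omega
      have hnb : Neighbor x x' := by
        unfold Neighbor
        rw [Finset.sum_eq_single_of_mem i0 (Finset.mem_univ i0)]
        · exact hd0
        · intro i _ hi
          rw [hxo i hi, Nat.dist_self]
      have hdrop : Nat.dist (x' i0) (y i0) + 1 = Nat.dist (x i0) (y i0) := by
        rw [hxi0, hc]; simp [Nat.dist]; split <;> omega
      have hsum' : (∑ i, Nat.dist (x' i) (y i)) ≤ N := by
        have e1 : (∑ i, Nat.dist (x i) (y i)) =
            (∑ i ∈ Finset.univ.erase i0, Nat.dist (x i) (y i)) + Nat.dist (x i0) (y i0) := by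
          rw [Finset.sum_erase_add _ _ (Finset.mem_univ i0)]
        have e2 : (∑ i, Nat.dist (x' i) (y i)) =
            (∑ i ∈ Finset.univ.erase i0, Nat.dist (x' i) (y i)) + Nat.dist (x' i0) (y i0) := by
          rw [Finset.sum_erase_add _ _ (Finset.mem_univ i0)]
        have e3 : (∑ i ∈ Finset.univ.erase i0, Nat.dist (x' i) (y i)) =
            (∑ i ∈ Finset.univ.erase i0, Nat.dist (x i) (y i)) := by
          apply Finset.sum_congr rfl
          intro i hi
          rw [hxo i (Finset.ne_of_mem_erase hi)]
        omega
      exact Relation.ReflTransGen.head ⟨hx, hx'box, hnb⟩ (ih x' y hsum' hx'box hy)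

/-- Every block of the grid induced by the partition `P` is of the form
`∏_j I_{i_j}[k:]`, its closure is `∏_j Ī_{i_j}`, and its boundary is
`⋃_j Ī_{i_1} × ⋯ × ∂I_{i_j} × ⋯ × Ī_{i_d}`. -/
theorem block_product_structure (n d k w : ℕ) (hd : 1 ≤ d) (hk : 2 ≤ k)
    (hkw : k ≤ w) (hwn : w ≤ n) (P : IntervalPartition n w)
    (B : Set (Fin d → ℕ)) (hB : IsBlock n d (gridOf n d k w P) B) :
    ∃ f : Fin d → Fin P.t,
      B = {x | ∀ j, x j ∈ dropSmallest (P.I (f j)) (k - 1)} ∧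
      blockClosure n d k B = {x | ∀ j, x j ∈ Ibar P k (f j)} ∧
      blockBoundary n d k B =
        ⋃ j : Fin d,
          {x | x j ∈ Ibd P k (f j) ∧ ∀ j', j' ≠ j → x j' ∈ Ibar P k (f j')} := by
  choose a b h1 hab hbn hI using P.interval
  have hmem : ∀ (j : Fin P.t) (x : ℕ), x ∈ P.I j ↔ a j ≤ x ∧ x ≤ b j := by
    intro j x; rw [hI j, Finset.mem_Icc]
  have hbk : ∀ j, a j + k ≤ b j + 1 := by
    intro j
    have hs := P.size j
    rw [hI j, Nat.card_Icc] at hs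
    have := hab j
    omega
  have huniq : ∀ (j j' : Fin P.t) (x : ℕ), x ∈ P.I j → x ∈ P.I j' → j = j' := by
    intro j j' x hj hj'
    by_contra hne
    rcases lt_or_gt_of_ne hne with h | h
    · exact absurd (P.ordered j j' h x hj x hj') (lt_irrefl x)
    · exact absurd (P.ordered j' j h x hj' x hj) (lt_irrefl x)
  have hlast : ∀ j : Fin P.t, (j : ℕ) + 1 = P.t → b j = n := by
    intro j hj
    obtain ⟨j', hj'⟩ := P.cover n (Finset.mem_Icc.mpr ⟨by omega, le_rfl⟩)
    have hj'j : j' = j := by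
      by_contra hne
      have hlt : j' < j := by
        rw [Fin.lt_def]
        have h2 := j'.isLt
        have h3 : (j' : ℕ) ≠ (j : ℕ) := fun hc => hne (Fin.ext hc)
        omega
      have ho := P.ordered j' j hlt n hj' (a j) ((hmem j (a j)).mpr ⟨le_rfl, hab j⟩)
      have := hbn j; have := hab j
      omega
    rw [hj'j, hmem] at hj'
    have := hbn j
    omega
  have hsucc : ∀ (j : Fin P.t) (h : (j : ℕ) + 1 < P.t),
      b j < n ∧ a ⟨(j : ℕ) + 1, h⟩ = b j + 1 := by
    intro j h
    set j2 : Fin P.t := ⟨(j : ℕ) + 1, h⟩ with hj2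
    have hjlt : j < j2 := by rw [Fin.lt_def]; simp [hj2]
    have hgt : b j < a j2 := P.ordered j j2 hjlt (b j) ((hmem j _).mpr ⟨hab j, le_rfl⟩)
      (a j2) ((hmem j2 _).mpr ⟨le_rfl, hab j2⟩)
    have hbn2 := hbn j2
    have hab2 := hab j2
    have hbn' : b j < n := by omega
    obtain ⟨j', hj'⟩ := P.cover (b j + 1)
      (Finset.mem_Icc.mpr ⟨by have := h1 j; have := hab j; omega, by omega⟩)
    have hj'mem := (hmem j' _).mp hj'
    have hj'j2 : j' = j2 := by
      rcases lt_trichotomy j' j2 with hlt | heq | hgt'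
      · rcases lt_trichotomy j' j with hlt2 | heq2 | hgt2
        · have ho := P.ordered j' j hlt2 (b j + 1) hj' (a j)
            ((hmem j _).mpr ⟨le_rfl, hab j⟩)
          have := hab j; omega
        · rw [heq2, hmem] at hj'; omega
        · exfalso
          rw [Fin.lt_def] at hgt2 hlt
          simp only [hj2] at hlt
          omega
      · exact heq
      · have ho := P.ordered j2 j' hgt' (a j2) ((hmem j2 _).mpr ⟨le_rfl, hab j2⟩)
          (b j + 1) hj'
        omega
    rw [hj'j2] at hj'mem
    exact ⟨hbn', by omega⟩
  -- uniform upper bound for Ibar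
  obtain ⟨ub, hub⟩ : ∃ ub : Fin P.t → ℕ,
      ∀ j, ub j = if (j : ℕ) + 1 < P.t then b j + k - 1 else b j := ⟨_, fun _ => rfl⟩
  have hubn : ∀ j, ub j ≤ n := by
    intro j
    rw [hub]
    split
    · rename_i h
      have ⟨hblt, ha2⟩ := hsucc j h
      have hb2 := hbk ⟨(j : ℕ) + 1, h⟩
      have := hbn ⟨(j : ℕ) + 1, h⟩
      omega
    · exact hbn j
  have hubb : ∀ j, b j ≤ ub j := by
    intro j; rw [hub]; split <;> omega
  have huble : ∀ j, ub j ≤ b j + k - 1 := by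
    intro j; rw [hub]; split <;> omega
  have hIbar : ∀ (j : Fin P.t) (x : ℕ), x ∈ Ibar P k j ↔ a j ≤ x ∧ x ≤ ub j := by
    intro j x
    unfold Ibar nextTake
    rw [Finset.mem_union, hub]
    by_cases h : (j : ℕ) + 1 < P.t
    · rw [dif_pos h, if_pos h]
      obtain ⟨hblt, ha2⟩ := hsucc j h
      rw [hI, hI, Finset.mem_Icc, mem_take_Icc, ha2]
      have hb2 := hbk ⟨(j : ℕ) + 1, h⟩
      rw [ha2] at hb2
      have := hbk j
      omega
    · rw [dif_neg h, if_neg h]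
      simp only [Finset.notMem_empty, or_false]
      rw [hI, Finset.mem_Icc]
  have hIbd : ∀ (j : Fin P.t) (x : ℕ), x ∈ Ibd P k j ↔
      (a j ≤ x ∧ x + 2 ≤ a j + k) ∨
      (((j : ℕ) + 1 < P.t) ∧ b j + 1 ≤ x ∧ x + 1 ≤ b j + k) := by
    intro j x
    unfold Ibd nextTake
    rw [Finset.mem_union, hI, mem_take_Icc]
    have hbkj := hbk j
    by_cases h : (j : ℕ) + 1 < P.t
    · rw [dif_pos h]
      obtain ⟨hblt, ha2⟩ := hsucc j h
      rw [hI, mem_take_Icc, ha2]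
      have hb2 := hbk ⟨(j : ℕ) + 1, h⟩
      rw [ha2] at hb2
      constructor
      · rintro (h' | h')
        · exact Or.inl ⟨h'.1, by omega⟩
        · exact Or.inr ⟨h, by omega⟩
      · rintro (h' | h')
        · exact Or.inl ⟨h'.1, by omega, by omega⟩
        · exact Or.inr ⟨by omega, by omega, by omega⟩
    · rw [dif_neg h]
      simp only [Finset.notMem_empty, or_false]
      constructor
      · intro h'; exact Or.inl ⟨h'.1, by omega⟩
      · rintro (h' | h')
        · exact ⟨h'.1, by omega, by omega⟩
        · exact absurd h'.1 h
  have hfree : ∀ x : Fin d → ℕ, x ∈ cube n d \ gridOf n d k w P ↔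
      ((∀ i, 1 ≤ x i ∧ x i ≤ n) ∧
        ∀ (i : Fin d) (j : Fin P.t), x i ∉ takeSmallest (P.I j) (k - 1)) := by
    intro x
    unfold gridOf cube
    simp only [Set.mem_diff, Set.mem_setOf_eq]
    constructor
    · rintro ⟨hc, hg⟩
      exact ⟨hc, fun i j hm => hg ⟨hc, i, j, hm⟩⟩
    · rintro ⟨hc, hg⟩
      exact ⟨hc, fun ⟨_, i, j, hm⟩ => hg i j hm⟩
  obtain ⟨⟨x₀, hx₀B⟩, hBsub, hBconn, hBcl⟩ := hB
  have hx₀ := (hfree x₀).mp (hBsub hx₀B)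
  have hfx : ∀ i : Fin d, ∃ j, a j + (k - 1) ≤ x₀ i ∧ x₀ i ≤ b j := by
    intro i
    obtain ⟨j, hj⟩ := P.cover (x₀ i) (Finset.mem_Icc.mpr ⟨(hx₀.1 i).1, (hx₀.1 i).2⟩)
    refine ⟨j, ?_, ((hmem j _).mp hj).2⟩
    have h2 := (hmem j _).mp hj
    have h3 := hx₀.2 i j
    rw [hI, mem_take_Icc] at h3
    omega
  choose f hf1 hf2 using hfx
  refine ⟨f, ?_⟩
  -- S-membership predicate
  have hSfree : ∀ x : Fin d → ℕ, (∀ j, a (f j) + (k - 1) ≤ x j ∧ x j ≤ b (f j)) →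
      x ∈ cube n d \ gridOf n d k w P := by
    intro x hx
    refine (hfree x).mpr ⟨fun i => ⟨?_, ?_⟩, ?_⟩
    · have := hx i; have := h1 (f i); omega
    · have := hx i; have := hbn (f i); omega
    · intro i j hm
      rw [hI, mem_take_Icc] at hm
      have hxi := hx i
      have hj : j = f i := huniq j (f i) (x i) ((hmem j _).mpr ⟨hm.1, hm.2.1⟩)
        ((hmem (f i) _).mpr ⟨by omega, hxi.2⟩)
      subst hj
      omega
  have hSstep : ∀ x : Fin d → ℕ, (∀ j, a (f j) + (k - 1) ≤ x j ∧ x j ≤ b (f j)) →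
      ∀ y, y ∈ cube n d \ gridOf n d k w P → Neighbor x y →
      ∀ j, a (f j) + (k - 1) ≤ y j ∧ y j ≤ b (f j) := by
    intro x hx y hy hnb j
    obtain ⟨i0, hdist, heq⟩ := neighbor_exists hnb
    by_cases hj : j = i0
    case neg => rw [← heq j hj]; exact hx j
    subst hj
    have hyfree := (hfree y).mp hy
    have hyj : y j = x j + 1 ∨ x j = y j + 1 := by
      simp [Nat.dist] at hdist
      omega
    have hxj := hx j
    rcases hyj with h | h
    · by_cases hb : x j < b (f j)
      · exact ⟨by omega, by omega⟩
      · exfalso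
        by_cases ht : ((f j) : ℕ) + 1 < P.t
        · obtain ⟨_, ha2⟩ := hsucc (f j) ht
          apply hyfree.2 j ⟨((f j) : ℕ) + 1, ht⟩
          rw [hI, mem_take_Icc, ha2]
          have hb2 := hbk ⟨((f j) : ℕ) + 1, ht⟩
          rw [ha2] at hb2
          omega
        · have hbn' : b (f j) = n := hlast (f j) (by have := (f j).isLt; omega)
          have := (hyfree.1 j).2
          omega
    · by_cases hb : a (f j) + (k - 1) < x j
      · exact ⟨by omega, by omega⟩
      · exfalso
        apply hyfree.2 j (f j)
        rw [hI, mem_take_Icc]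
        have := hbk (f j)
        omega
  have hx₀S : ∀ j, a (f j) + (k - 1) ≤ x₀ j ∧ x₀ j ≤ b (f j) := fun j => ⟨hf1 j, hf2 j⟩
  have hBS : B = {x : Fin d → ℕ | ∀ j, a (f j) + (k - 1) ≤ x j ∧ x j ≤ b (f j)} := by
    apply Set.eq_of_subset_of_subset
    · intro y hyB
      have hpath := hBconn x₀ hx₀B y hyB
      have hstep : ∀ z u : Fin d → ℕ,
          Relation.ReflTransGen (fun a b => a ∈ cube n d \ gridOf n d k w P ∧
            b ∈ cube n d \ gridOf n d k w P ∧ Neighbor a b) z u →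
          (∀ j, a (f j) + (k - 1) ≤ z j ∧ z j ≤ b (f j)) →
          (∀ j, a (f j) + (k - 1) ≤ u j ∧ u j ≤ b (f j)) := by
        intro z u hzu
        induction hzu with
        | refl => exact id
        | tail _ hst ih =>
          intro hz
          exact hSstep _ (ih hz) _ hst.2.1 hst.2.2
      exact hstep x₀ y hpath hx₀S
    · intro y hyS
      have hpath := connect_aux (fun j => a (f j) + (k - 1)) (fun j => b (f j))
        (∑ i, Nat.dist (x₀ i) (y i)) x₀ y le_rfl hx₀S hyS
      have hstep : ∀ z u : Fin d → ℕ,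
          Relation.ReflTransGen (fun v v' => (∀ j, a (f j) + (k - 1) ≤ v j ∧ v j ≤ b (f j)) ∧
            (∀ j, a (f j) + (k - 1) ≤ v' j ∧ v' j ≤ b (f j)) ∧ Neighbor v v') z u →
          z ∈ B → u ∈ B := by
        intro z u hzu
        induction hzu with
        | refl => exact id
        | tail _ hst ih =>
          intro hz
          exact hBcl _ (ih hz) _ (hSfree _ hst.2.1) hst.2.2
      exact hstep x₀ y hpath hx₀B
  have hB1 : B = {x : Fin d → ℕ | ∀ j, x j ∈ dropSmallest (P.I (f j)) (k - 1)} := by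
    rw [hBS]
    ext x
    simp only [Set.mem_setOf_eq]
    constructor
    · intro h j
      rw [hI, mem_drop_Icc]
      exact h j
    · intro h j
      have := h j
      rw [hI, mem_drop_Icc] at this
      exact this
  have hB2 : blockClosure n d k B = {x | ∀ j, x j ∈ Ibar P k (f j)} := by
    ext x
    unfold blockClosure cube
    rw [hBS]
    simp only [Set.mem_setOf_eq]
    constructor
    · rintro ⟨hxc, y, hyS, hdist⟩ j
      rw [hIbar, hub]
      have h1' := hyS j
      have h2' := hdist j
      have h3' := hxc j
      have hbkj := hbk (f j)
      simp [Nat.dist] at h2'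
      split
      · omega
      · rename_i ht
        have : b (f j) = n := hlast (f j) (by have := (f j).isLt; omega)
        omega
    · intro h
      have hcl : ∀ j, a (f j) ≤ x j ∧ x j ≤ ub (f j) := by
        intro j
        have := h j
        rw [hIbar] at this
        exact this
      refine ⟨fun i => ⟨?_, ?_⟩, ?_⟩
      · have := (hcl i).1; have := h1 (f i); omega
      · have := (hcl i).2; have := hubn (f i); omega
      · refine ⟨fun j => if x j < a (f j) + (k - 1) then a (f j) + (k - 1)
          else min (x j) (b (f j)), fun j => ?_, fun i => ?_⟩
        · have := hcl j
          have := hbk (f j)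
          dsimp only
          split <;> constructor <;> omega
        · have := hcl i
          have := hbk (f i)
          have := huble (f i)
          simp only [Nat.dist]
          split <;> omega
  refine ⟨hB1, hB2, ?_⟩
  unfold blockBoundary
  rw [hB2, hBS]
  ext x
  simp only [Set.mem_diff, Set.mem_setOf_eq, Set.mem_iUnion]
  constructor
  · rintro ⟨hcl, hnB⟩
    rw [not_forall] at hnB
    obtain ⟨j0, hj0⟩ := hnB
    refine ⟨j0, ?_, fun j' _ => hcl j'⟩
    have hcl0 := hcl j0
    rw [hIbar] at hcl0
    rw [hIbd]
    have hbkj := hbk (f j0)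
    have := huble (f j0)
    by_cases ht : ((f j0) : ℕ) + 1 < P.t
    · rw [hub, if_pos ht] at hcl0
      by_cases hlow : x j0 < a (f j0) + (k - 1)
      · exact Or.inl ⟨hcl0.1, by omega⟩
      · exact Or.inr ⟨ht, by omega, by omega⟩
    · rw [hub, if_neg ht] at hcl0
      exact Or.inl ⟨hcl0.1, by omega⟩
  · rintro ⟨j0, hj0, hrest⟩
    rw [hIbd] at hj0
    have hbkj := hbk (f j0)
    constructor
    · intro j
      by_cases hj : j = j0
      · subst hj
        rw [hIbar]
        have := hubb (f j)
        rcases hj0 with h' | h'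
        · exact ⟨h'.1, by omega⟩
        · rw [hub, if_pos h'.1]
          exact ⟨by omega, by omega⟩
      · exact hrest j hj
    · intro hall
      have := hall j0
      rcases hj0 with h' | h' <;> omega
end

section
/- Let G ∈ G(n,d,k,w) and let B be a G-block. Then |B| ≤ (w+2−k)^d, |B̄| ≤ (w+k)^d, and |∂B| ≤ 2d(k−1)(w+k)^{d−1}. -/
open Finset

lemma takeSmallest_Icc (a b ℓ : ℕ) (h1 : 1 ≤ ℓ) (h2 : a + ℓ ≤ b + 1) :
    takeSmallest (Finset.Icc a b) ℓ = Finset.Icc a (a + ℓ - 1) := by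
  have hf : ∀ x, ((Finset.Icc a b).filter fun y => y ≤ x).card = min b x + 1 - a := by
    intro x
    have h : (Finset.Icc a b).filter (fun y => y ≤ x) = Finset.Icc a (min b x) := by
      ext y; simp only [Finset.mem_filter, Finset.mem_Icc]; omega
    rw [h, Nat.card_Icc]
  unfold takeSmallest
  ext x
  simp only [Finset.mem_filter, Finset.mem_Icc, hf]
  omega

/-- Size bounds for a `G`-block, its closure and its boundary:
`|B| ≤ (w+2−k)^d`, `|B̄| ≤ (w+k)^d`, `|∂B| ≤ 2d(k−1)(w+k)^(d−1)`. -/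
theorem block_size_bounds (n d k w : ℕ) (hd : 1 ≤ d) (hk : 2 ≤ k)
    (hkw : k ≤ w) (hwn : w ≤ n) (G B : Set (Fin d → ℕ))
    (hG : IsGrid n d k w G) (hB : IsBlock n d G B) :
    B.ncard ≤ (w + 2 - k) ^ d ∧
    (blockClosure n d k B).ncard ≤ (w + k) ^ d ∧
    (blockBoundary n d k B).ncard ≤ 2 * d * (k - 1) * (w + k) ^ (d - 1) := by
  obtain ⟨P, rfl⟩ := hG
  obtain ⟨⟨x0, hx0⟩, hsub, hconn, habs⟩ := hB
  -- basic facts about membership of the complement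
  have hcomplIff : ∀ z : Fin d → ℕ, z ∈ cube n d \ gridOf n d k w P ↔
      ((∀ i, 1 ≤ z i ∧ z i ≤ n) ∧ ∀ (i : Fin d) (j' : Fin P.t),
        z i ∉ takeSmallest (P.I j') (k - 1)) := by
    intro z
    constructor
    · rintro ⟨hc, hg⟩
      refine ⟨hc, fun i j' hmem => hg ⟨hc, i, j', hmem⟩⟩
    · rintro ⟨hc, hg⟩
      exact ⟨hc, fun ⟨_, i, j', hmem⟩ => hg i j' hmem⟩
  -- interval data for each coordinate of x0
  have hx0c := (hcomplIff x0).mp (hsub hx0)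
  have hj : ∀ i : Fin d, ∃ j : Fin P.t, x0 i ∈ P.I j := by
    intro i
    exact P.cover (x0 i) (Finset.mem_Icc.mpr ⟨(hx0c.1 i).1, (hx0c.1 i).2⟩)
  choose j hjmem using hj
  choose a b ha1 hab hbn hI using fun i => P.interval (j i)
  -- size facts
  have hcard : ∀ i, b i + 1 - a i = w ∨ b i + 1 - a i = w + 1 := by
    intro i
    have := P.size (j i)
    rw [hI i, Nat.card_Icc] at this
    exact this
  have hklb : ∀ i, a i + (k - 1) ≤ b i + 1 := by
    intro i; rcases hcard i with h | h <;> omega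
  have htake : ∀ i, takeSmallest (P.I (j i)) (k - 1) = Finset.Icc (a i) (a i + (k-1) - 1) := by
    intro i
    rw [hI i, takeSmallest_Icc (a i) (b i) (k-1) (by omega) (hklb i)]
  -- general lemma: interval data for any interval
  have hIfull : ∀ j' : Fin P.t, ∃ a' b', 1 ≤ a' ∧ a' ≤ b' ∧ b' ≤ n ∧
      P.I j' = Finset.Icc a' b' ∧ a' + (k-1) ≤ b' + 1 ∧
      takeSmallest (P.I j') (k-1) = Finset.Icc a' (a' + (k-1) - 1) := by
    intro j'
    obtain ⟨a', b', h1, h2, h3, h4⟩ := P.interval j'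
    have hc := P.size j'
    rw [h4, Nat.card_Icc] at hc
    have h5 : a' + (k-1) ≤ b' + 1 := by rcases hc with h | h <;> omega
    exact ⟨a', b', h1, h2, h3, h4, h5, by
      rw [h4, takeSmallest_Icc a' b' (k-1) (by omega) h5]⟩
  -- x0 is in the product box
  have hx0box : ∀ i, x0 i ∈ Finset.Icc (a i + (k-1)) (b i) := by
    intro i
    have hmem := hjmem i
    rw [hI i, Finset.mem_Icc] at hmem
    have hnot := hx0c.2 i (j i)
    rw [htake i, Finset.mem_Icc] at hnot
    rw [Finset.mem_Icc]
    omega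
  -- a point of the complement (coordinate-wise) lies in the drop part of some interval
  have hmemdrop : ∀ v, 1 ≤ v → v ≤ n → (∀ j' : Fin P.t, v ∉ takeSmallest (P.I j') (k-1)) →
      ∃ j' : Fin P.t, ∃ a' b', P.I j' = Finset.Icc a' b' ∧ v ∈ Finset.Icc (a' + (k-1)) b' := by
    intro v hv1 hvn hvt
    obtain ⟨j', hj'⟩ := P.cover v (Finset.mem_Icc.mpr ⟨hv1, hvn⟩)
    obtain ⟨a', b', h1, h2, h3, h4, h5, h6⟩ := hIfull j'
    refine ⟨j', a', b', h4, ?_⟩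
    have hnot := hvt j'
    rw [h6, Finset.mem_Icc] at hnot
    rw [h4, Finset.mem_Icc] at hj'
    rw [Finset.mem_Icc]
    omega
  -- key coordinate step lemma: two nearby drop-points are in the same interval
  have hstepc : ∀ (i : Fin d) (u v : ℕ), u ∈ Finset.Icc (a i + (k-1)) (b i) →
      1 ≤ v → v ≤ n → (∀ j' : Fin P.t, v ∉ takeSmallest (P.I j') (k-1)) →
      Nat.dist u v ≤ 1 → v ∈ Finset.Icc (a i + (k-1)) (b i) := by
    intro i u v hu hv1 hvn hvt hdist
    obtain ⟨j', a', b', hI', hv⟩ := hmemdrop v hv1 hvn hvt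
    rcases eq_or_ne j' (j i) with rfl | hne
    · rw [hI i] at hI'
      have hmm : ∀ x, (a i ≤ x ∧ x ≤ b i) ↔ (a' ≤ x ∧ x ≤ b') := by
        intro x
        rw [← Finset.mem_Icc, ← Finset.mem_Icc, ← hI']
      rw [Finset.mem_Icc] at hv ⊢
      have e1 := (hmm (a i)).mp ⟨le_refl _, hab i⟩
      have e2 := (hmm a').mpr ⟨le_refl _, by omega⟩
      have e3 := (hmm (b i)).mp ⟨hab i, le_refl _⟩
      have e4 := (hmm b').mpr ⟨by omega, le_refl _⟩
      omega
    · exfalso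
      rw [Finset.mem_Icc] at hu hv
      have hmemu : u ∈ P.I (j i) := by rw [hI i, Finset.mem_Icc]; omega
      have hmemv : v ∈ P.I j' := by rw [hI', Finset.mem_Icc]; omega
      have hd : u - v + (v - u) ≤ 1 := by simpa [Nat.dist] using hdist
      rcases lt_or_gt_of_ne hne with hlt | hlt
      · -- j' < j i : everything in I j' < everything in I (j i)
        have hav : a i ∈ P.I (j i) := by
          rw [hI i, Finset.mem_Icc]; exact ⟨le_refl _, by omega⟩
        have h1 : v < a i := P.ordered j' (j i) hlt v hmemv (a i) hav
        have h2 : v < u := P.ordered j' (j i) hlt v hmemv u hmemu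
        omega
      · -- j i < j'
        have hav : a' ∈ P.I j' := by
          rw [hI', Finset.mem_Icc]; exact ⟨le_refl _, by omega⟩
        have h1 : u < a' := P.ordered (j i) j' hlt u hmemu a' hav
        omega
  -- Claim 1: B is contained in the product box
  have claim1 : ∀ y ∈ B, ∀ i, y i ∈ Finset.Icc (a i + (k-1)) (b i) := by
    intro y hy
    have hrt := hconn x0 hx0 y hy
    clear hy
    induction hrt with
    | refl => exact hx0box
    | @tail p q hxz hstep ih =>
      obtain ⟨hc1, hc2, hnb⟩ := hstep
      have hc2' := (hcomplIff _).mp hc2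
      intro i
      have hnb' : (∑ i', Nat.dist (p i') (q i')) = 1 := hnb
      have hdle : Nat.dist (p i) (q i) ≤ 1 := by
        calc Nat.dist (p i) (q i) ≤ ∑ i', Nat.dist (p i') (q i') :=
              Finset.single_le_sum (f := fun i' => Nat.dist (p i') (q i'))
                (fun i' _ => Nat.zero_le _) (Finset.mem_univ i)
          _ = 1 := hnb'
      exact hstepc i _ _ (ih i) (hc2'.1 i).1 (hc2'.1 i).2 (fun j' => hc2'.2 i j') hdle
  -- every point of the box is in the complement
  have hboxcompl : ∀ z : Fin d → ℕ, (∀ i, z i ∈ Finset.Icc (a i + (k-1)) (b i)) →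
      z ∈ cube n d \ gridOf n d k w P := by
    intro z hz
    rw [hcomplIff]
    constructor
    · intro i
      have := hz i; rw [Finset.mem_Icc] at this
      have h1 := ha1 i; have h2 := hbn i
      constructor <;> omega
    · intro i j' hmem
      have hzi := hz i; rw [Finset.mem_Icc] at hzi
      have hziI : z i ∈ P.I (j i) := by
        rw [hI i, Finset.mem_Icc]; omega
      rcases eq_or_ne j' (j i) with rfl | hne
      · rw [htake i, Finset.mem_Icc] at hmem
        omega
      · obtain ⟨a', b', h1, h2, h3, h4, h5, h6⟩ := hIfull j'
        have hziI' : z i ∈ P.I j' := Finset.filter_subset _ _ hmem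
        rcases lt_or_gt_of_ne hne with hlt | hlt
        · exact absurd (P.ordered j' (j i) hlt _ hziI' _ hziI) (lt_irrefl _)
        · exact absurd (P.ordered (j i) j' hlt _ hziI _ hziI') (lt_irrefl _)
  -- Claim 2: the box is contained in B
  have claim2 : ∀ m (z : Fin d → ℕ), (∀ i, z i ∈ Finset.Icc (a i + (k-1)) (b i)) →
      (∑ i, Nat.dist (z i) (x0 i)) = m → z ∈ B := by
    intro m
    induction m using Nat.strong_induction_on with
    | _ m ih =>
      intro z hz hsum
      by_cases hzx : z = x0
      · rw [hzx]; exact hx0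
      · have hex : ∃ i, z i ≠ x0 i := by
          by_contra h
          push_neg at h
          exact hzx (funext h)
        obtain ⟨i, hi⟩ := hex
        obtain ⟨v, hv1, hv2, hv3⟩ : ∃ v, Nat.dist v (z i) = 1 ∧
            v ∈ Finset.Icc (a i + (k-1)) (b i) ∧
            Nat.dist v (x0 i) < Nat.dist (z i) (x0 i) := by
          have h1 := hz i; have h2 := hx0box i
          rw [Finset.mem_Icc] at h1 h2
          rcases lt_or_gt_of_ne hi with h | h
          · exact ⟨z i + 1, by unfold Nat.dist; omega,
              Finset.mem_Icc.mpr (by omega), by unfold Nat.dist; omega⟩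
          · exact ⟨z i - 1, by unfold Nat.dist; omega,
              Finset.mem_Icc.mpr (by omega), by unfold Nat.dist; omega⟩
        set z' := Function.update z i v with hz'def
        have hz'box : ∀ i', z' i' ∈ Finset.Icc (a i' + (k-1)) (b i') := by
          intro i'
          rcases eq_or_ne i' i with rfl | hne
          · rw [hz'def, Function.update_self]; exact hv2
          · rw [hz'def, Function.update_of_ne hne]; exact hz i'
        have hlt : (∑ i', Nat.dist (z' i') (x0 i')) < m := by
          rw [← hsum]
          apply Finset.sum_lt_sum
          · intro i' _
            rcases eq_or_ne i' i with rfl | hne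
            · rw [hz'def, Function.update_self]; exact le_of_lt hv3
            · rw [hz'def, Function.update_of_ne hne]
          · exact ⟨i, Finset.mem_univ i, by rw [hz'def, Function.update_self]; exact hv3⟩
        have hz'B : z' ∈ B := ih _ hlt z' hz'box rfl
        apply habs z' hz'B z (hboxcompl z hz)
        show (∑ i', Nat.dist (z' i') (z i')) = 1
        rw [Finset.sum_eq_single_of_mem i (Finset.mem_univ i)]
        · rw [hz'def, Function.update_self]; exact hv1
        · intro i' _ hne
          rw [hz'def, Function.update_of_ne hne, Nat.dist_self]
  -- B equals the product box
  have hBeq : B = ↑(Fintype.piFinset fun i => Finset.Icc (a i + (k-1)) (b i)) := by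
    apply Set.Subset.antisymm
    · intro y hy
      rw [Finset.mem_coe, Fintype.mem_piFinset]
      exact claim1 y hy
    · intro z hz
      rw [Finset.mem_coe, Fintype.mem_piFinset] at hz
      exact claim2 _ z hz rfl
  have hfactD : ∀ i, (Finset.Icc (a i + (k-1)) (b i)).card ≤ w + 2 - k := by
    intro i; rw [Nat.card_Icc]; rcases hcard i with h|h <;> omega
  have hfactE : ∀ i, (Finset.Icc (a i) (b i + (k-1))).card ≤ w + k := by
    intro i; rw [Nat.card_Icc]; rcases hcard i with h|h <;> omega
  have hclos : blockClosure n d k B ⊆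
      ↑(Fintype.piFinset fun i => Finset.Icc (a i) (b i + (k-1))) := by
    rintro x ⟨hxc, y, hyB, hdist⟩
    rw [Finset.mem_coe, Fintype.mem_piFinset]
    intro i
    have hy := claim1 y hyB i
    rw [Finset.mem_Icc] at hy ⊢
    have hd := hdist i
    unfold Nat.dist at hd
    omega
  refine ⟨?_, ?_, ?_⟩
  · rw [hBeq, Set.ncard_coe_finset, Fintype.card_piFinset]
    calc ∏ i, (Finset.Icc (a i + (k-1)) (b i)).card
        ≤ (w+2-k) ^ (Finset.univ : Finset (Fin d)).card :=
          Finset.prod_le_pow_card _ _ _ (fun i _ => hfactD i)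
      _ = (w+2-k) ^ d := by rw [Finset.card_univ, Fintype.card_fin]
  · calc (blockClosure n d k B).ncard
        ≤ (↑(Fintype.piFinset fun i => Finset.Icc (a i) (b i + (k-1))) :
            Set (Fin d → ℕ)).ncard :=
          Set.ncard_le_ncard hclos (Finset.finite_toSet _)
      _ = (Fintype.piFinset fun i => Finset.Icc (a i) (b i + (k-1))).card :=
          Set.ncard_coe_finset _
      _ = ∏ i, (Finset.Icc (a i) (b i + (k-1))).card := Fintype.card_piFinset _
      _ ≤ (w+k) ^ (Finset.univ : Finset (Fin d)).card :=
          Finset.prod_le_pow_card _ _ _ (fun i _ => hfactE i)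
      _ = (w+k) ^ d := by rw [Finset.card_univ, Fintype.card_fin]
  · -- boundary
    have hbnd : blockBoundary n d k B ⊆
        ↑((Fintype.piFinset fun i => Finset.Icc (a i) (b i + (k-1))) \
          (Fintype.piFinset fun i => Finset.Icc (a i + (k-1)) (b i))) := by
      rintro x ⟨hxcl, hxB⟩
      rw [Finset.coe_sdiff]
      refine ⟨hclos hxcl, fun hmem => hxB ?_⟩
      rw [hBeq]
      exact hmem
    have hsub3 : (Fintype.piFinset fun i => Finset.Icc (a i) (b i + (k-1))) \
          (Fintype.piFinset fun i => Finset.Icc (a i + (k-1)) (b i)) ⊆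
        Finset.univ.biUnion (fun i => Fintype.piFinset (fun j' =>
          if j' = i then (Finset.Icc (a j') (b j' + (k-1))) \
            (Finset.Icc (a j' + (k-1)) (b j'))
          else Finset.Icc (a j') (b j' + (k-1)))) := by
      intro x hx
      rw [Finset.mem_sdiff] at hx
      obtain ⟨hE, hD⟩ := hx
      rw [Fintype.mem_piFinset] at hE
      have hex : ∃ i, x i ∉ Finset.Icc (a i + (k-1)) (b i) := by
        by_contra h
        push_neg at h
        exact hD (Fintype.mem_piFinset.mpr h)
      obtain ⟨i, hi⟩ := hex
      refine Finset.mem_biUnion.mpr ⟨i, Finset.mem_univ i, ?_⟩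
      rw [Fintype.mem_piFinset]
      intro j'
      by_cases hji : j' = i
      · subst hji
        rw [if_pos rfl, Finset.mem_sdiff]
        exact ⟨hE j', hi⟩
      · rw [if_neg hji]
        exact hE j'
    have hone : ∀ i : Fin d, (Fintype.piFinset (fun j' =>
          if j' = i then (Finset.Icc (a j') (b j' + (k-1))) \
            (Finset.Icc (a j' + (k-1)) (b j'))
          else Finset.Icc (a j') (b j' + (k-1)))).card
        ≤ (2 * (k-1)) * (w+k) ^ (d-1) := by
      intro i
      rw [Fintype.card_piFinset,
        ← Finset.mul_prod_erase Finset.univ _ (Finset.mem_univ i)]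
      apply Nat.mul_le_mul
      · rw [if_pos rfl]
        have hsd : Finset.Icc (a i + (k-1)) (b i) ⊆
            Finset.Icc (a i) (b i + (k-1)) :=
          Finset.Icc_subset_Icc (by omega) (by omega)
        rw [Finset.card_sdiff_of_subset hsd, Nat.card_Icc, Nat.card_Icc]
        rcases hcard i with h|h <;> omega
      · refine le_trans (Finset.prod_le_pow_card _ _ (w+k) ?_) ?_
        · intro j' hj'
          rw [if_neg (Finset.ne_of_mem_erase hj')]
          exact hfactE j'
        · rw [Finset.card_erase_of_mem (Finset.mem_univ i), Finset.card_univ,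
            Fintype.card_fin]
    calc (blockBoundary n d k B).ncard
        ≤ (↑((Fintype.piFinset fun i => Finset.Icc (a i) (b i + (k-1))) \
            (Fintype.piFinset fun i => Finset.Icc (a i + (k-1)) (b i))) :
            Set (Fin d → ℕ)).ncard :=
          Set.ncard_le_ncard hbnd (Finset.finite_toSet _)
      _ = ((Fintype.piFinset fun i => Finset.Icc (a i) (b i + (k-1))) \
            (Fintype.piFinset fun i => Finset.Icc (a i + (k-1)) (b i))).card :=
          Set.ncard_coe_finset _
      _ ≤ ∑ i : Fin d, (Fintype.piFinset (fun j' =>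
            if j' = i then (Finset.Icc (a j') (b j' + (k-1))) \
              (Finset.Icc (a j' + (k-1)) (b j'))
            else Finset.Icc (a j') (b j' + (k-1)))).card :=
          le_trans (Finset.card_le_card hsub3) Finset.card_biUnion_le
      _ ≤ ∑ _i : Fin d, (2 * (k-1)) * (w+k) ^ (d-1) :=
          Finset.sum_le_sum (fun i _ => hone i)
      _ = d * ((2 * (k-1)) * (w+k) ^ (d-1)) := by
          rw [Finset.sum_const, Finset.card_univ, Fintype.card_fin, smul_eq_mul]
      _ = 2 * d * (k-1) * (w+k) ^ (d-1) := by ring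
end

section
/- For any grid G ∈ G(n,d,k,w) and any G-block B, the boundary ∂B is contained in G. -/
open Finset

lemma mem_takeSmallest_Icc {a b ℓ z : ℕ} :
    z ∈ takeSmallest (Finset.Icc a b) ℓ ↔ (a ≤ z ∧ z ≤ b ∧ z + 1 ≤ a + ℓ) := by
  unfold takeSmallest
  simp only [Finset.mem_filter, Finset.mem_Icc]
  constructor
  · rintro ⟨⟨h1, h2⟩, h3⟩
    refine ⟨h1, h2, ?_⟩
    have : (Finset.Icc a b).filter (fun y => y ≤ z) = Finset.Icc a z := by
      ext m; simp only [Finset.mem_filter, Finset.mem_Icc]; omega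
    rw [this, Nat.card_Icc] at h3
    omega
  · rintro ⟨h1, h2, h3⟩
    refine ⟨⟨h1, h2⟩, ?_⟩
    have : (Finset.Icc a b).filter (fun y => y ≤ z) = Finset.Icc a z := by
      ext m; simp only [Finset.mem_filter, Finset.mem_Icc]; omega
    rw [this, Nat.card_Icc]
    omega

section Main

variable {n d k w : ℕ} (P : IntervalPartition n w)

/-- A value is good if it is in `[1,n]` and not in any take-set. -/
def GoodVal (n w k : ℕ) (P : IntervalPartition n w) (v : ℕ) : Prop :=
  1 ≤ v ∧ v ≤ n ∧ ∀ j, v ∉ takeSmallest (P.I j) (k - 1)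

lemma goodVal_between (hk : 2 ≤ k) (hkw : k ≤ w)
    {u v z : ℕ} (hu : GoodVal n w k P u) (hv : GoodVal n w k P v)
    (huv : u ≤ v) (hd : v < u + k) (hz1 : u ≤ z) (hz2 : z ≤ v) :
    GoodVal n w k P z := by
  obtain ⟨hu1, hu2, hu3⟩ := hu
  obtain ⟨hv1, hv2, hv3⟩ := hv
  refine ⟨by omega, by omega, ?_⟩
  intro j hzj
  obtain ⟨a, b, ha1, hab, hbn, hIj⟩ := P.interval j
  rw [hIj, mem_takeSmallest_Icc] at hzj
  obtain ⟨haz, hzb, hzk⟩ := hzj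
  -- interval has size ≥ k
  have hcard : (P.I j).card = w ∨ (P.I j).card = w + 1 := P.size j
  rw [hIj, Nat.card_Icc] at hcard
  have hbk : a + k - 1 ≤ b := by omega
  by_cases hua : a ≤ u
  · -- u in same interval, u good forces u ≥ a + k - 1 > z ≥ u
    have := hu3 j
    rw [hIj, mem_takeSmallest_Icc] at this
    push_neg at this
    have := this hua (by omega)
    omega
  · -- u < a; locate v's interval
    push_neg at hua
    obtain ⟨j', hvj'⟩ := P.cover v (by simp; omega)
    obtain ⟨a', b', ha1', hab', hbn', hIj'⟩ := P.interval j'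
    have hv3' := hv3 j'
    rw [hIj', mem_takeSmallest_Icc] at hv3'
    rw [hIj', Finset.mem_Icc] at hvj'
    push_neg at hv3'
    have hvk : a' + (k - 1) < v + 1 := hv3' hvj'.1 hvj'.2
    rcases lt_trichotomy j j' with hlt | heq | hgt
    · have := P.ordered j j' hlt b (by rw [hIj]; simp [Finset.mem_Icc]; omega) a'
        (by rw [hIj']; simp [Finset.mem_Icc]; omega)
      omega
    · subst heq
      rw [hIj] at hIj'
      have : a = a' := by
        have h1 : a ∈ Finset.Icc a b := by simp [Finset.mem_Icc]; omega
        have h2 : a' ∈ Finset.Icc a' b' := by simp [Finset.mem_Icc]; omega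
        rw [hIj'] at h1
        rw [← hIj'] at h2
        simp [Finset.mem_Icc] at h1 h2
        omega
      omega
    · have := P.ordered j' j hgt v (by rw [hIj']; simp [Finset.mem_Icc]; omega) a
        (by rw [hIj]; simp [Finset.mem_Icc]; omega)
      omega

/-- Walk from y to x through good points. -/
lemma walk (hk : 2 ≤ k) (hkw : k ≤ w)
    (N : ℕ) :
    ∀ (x y : Fin d → ℕ), (∀ i, GoodVal n w k P (x i)) → (∀ i, GoodVal n w k P (y i)) →
    (∀ i, Nat.dist (x i) (y i) < k) → (∑ i, Nat.dist (x i) (y i)) ≤ N →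
    Relation.ReflTransGen
      (fun a b => a ∈ cube n d \ gridOf n d k w P ∧
        b ∈ cube n d \ gridOf n d k w P ∧ Neighbor a b) y x := by
  induction N with
  | zero =>
    intro x y hx hy _ hsum
    have : ∀ i, Nat.dist (x i) (y i) = 0 := by
      intro i
      have := Finset.sum_eq_zero_iff.mp (Nat.le_zero.mp hsum) i (Finset.mem_univ i)
      exact this
    have : y = x := by
      funext i
      have := Nat.eq_of_dist_eq_zero (this i)
      omega
    rw [this]
  | succ N ih =>
    intro x y hx hy hdist hsum
    by_cases hxy : y = x
    · rw [hxy]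
    · -- find coordinate where they differ
      have : ∃ i, x i ≠ y i := by
        by_contra hcon
        push_neg at hcon
        exact hxy (funext fun i => (hcon i).symm)
      obtain ⟨i, hi⟩ := this
      set v : ℕ := if y i < x i then y i + 1 else y i - 1 with hv
      set y' : Fin d → ℕ := Function.update y i v with hy'
      have hvy : Nat.dist v (y i) = 1 := by
        simp only [Nat.dist, hv]
        split <;> · have := (hy i).1; omega
      have hvx : Nat.dist (x i) v + 1 = Nat.dist (x i) (y i) := by
        simp only [Nat.dist, hv]
        rcases Nat.lt_or_ge (y i) (x i) with h | h
        · simp [h]; omega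
        · have : ¬ (y i < x i) := by omega
          simp [this]
          have := (hy i).1
          have : x i < y i := by omega
          omega
      have hdi : Nat.dist (x i) (y i) < k := hdist i
      simp only [Nat.dist] at hdi
      have hgv : GoodVal n w k P v := by
        rcases Nat.lt_or_ge (y i) (x i) with h | h
        · have hveq : v = y i + 1 := if_pos h
          rw [hveq]
          exact goodVal_between P hk hkw (hy i) (hx i)
            (by omega) (by omega) (by omega) (by omega)
        · have hxi : x i < y i := by omega
          have hveq : v = y i - 1 := if_neg (by omega)
          rw [hveq]
          exact goodVal_between P hk hkw (hx i) (hy i)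
            (by omega) (by omega) (by omega) (by have := (hy i).1; omega)
      have hgy' : ∀ j, GoodVal n w k P (y' j) := by
        intro j
        by_cases hj : j = i
        · subst hj; simp [hy']; exact hgv
        · simp [hy', Function.update_of_ne hj]; exact hy j
      -- membership in cube \ grid from goodness
      have hmem : ∀ (z : Fin d → ℕ), (∀ j, GoodVal n w k P (z j)) →
          z ∈ cube n d \ gridOf n d k w P := by
        intro z hz
        constructor
        · intro j; exact ⟨(hz j).1, (hz j).2.1⟩
        · rintro ⟨_, j, jj, hmem⟩
          exact (hz j).2.2 jj hmem
      have hstep : Neighbor y y' := by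
        unfold Neighbor
        rw [← Finset.sum_erase_add _ _ (Finset.mem_univ i)]
        have h1 : ∀ j ∈ Finset.univ.erase i, Nat.dist (y j) (y' j) = 0 := by
          intro j hj
          rw [hy', Function.update_of_ne (Finset.mem_erase.mp hj).1]
          simp [Nat.dist]
        rw [Finset.sum_eq_zero h1]
        simp only [hy', Function.update_self, zero_add]
        rw [Nat.dist_comm]
        exact hvy
      have hsum' : (∑ j, Nat.dist (x j) (y' j)) ≤ N := by
        have e1 : (∑ j, Nat.dist (x j) (y' j)) =
            (∑ j ∈ Finset.univ.erase i, Nat.dist (x j) (y j)) + Nat.dist (x i) v := by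
          rw [← Finset.sum_erase_add _ _ (Finset.mem_univ i)]
          congr 1
          · apply Finset.sum_congr rfl
            intro j hj
            rw [hy', Function.update_of_ne (Finset.mem_erase.mp hj).1]
          · simp [hy']
        have e2 : (∑ j, Nat.dist (x j) (y j)) =
            (∑ j ∈ Finset.univ.erase i, Nat.dist (x j) (y j)) + Nat.dist (x i) (y i) := by
          rw [← Finset.sum_erase_add _ _ (Finset.mem_univ i)]
        omega
      have hdist' : ∀ j, Nat.dist (x j) (y' j) < k := by
        intro j
        by_cases hj : j = i
        · subst hj; simp only [hy', Function.update_self]; have := hdist j; omega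
        · rw [hy', Function.update_of_ne hj]; exact hdist j
      exact Relation.ReflTransGen.head
        ⟨hmem y hy, hmem y' hgy', hstep⟩
        (ih x y' hx hgy' hdist' hsum')

end Main

/-- The boundary of any `G`-block is contained in the grid `G`. -/
theorem block_boundary_subset_grid (n d k w : ℕ) (hd : 1 ≤ d) (hk : 2 ≤ k)
    (hkw : k ≤ w) (hwn : w ≤ n) (G B : Set (Fin d → ℕ))
    (hG : IsGrid n d k w G) (hB : IsBlock n d G B) :
    blockBoundary n d k B ⊆ G := by
  obtain ⟨P, rfl⟩ := hG
  rintro x ⟨⟨hxcube, y, hyB, hclose⟩, hxB⟩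
  by_contra hxG
  apply hxB
  have hySub := hB.2.1 hyB
  -- goodness of x and y
  have hgood : ∀ (z : Fin d → ℕ), z ∈ cube n d \ gridOf n d k w P →
      ∀ i, GoodVal n w k P (z i) := by
    rintro z ⟨hzc, hzg⟩ i
    refine ⟨(hzc i).1, (hzc i).2, fun j hmem => hzg ⟨hzc, i, j, hmem⟩⟩
  have hxgood := hgood x ⟨hxcube, hxG⟩
  have hygood := hgood y hySub
  have hwalk := walk P hk hkw (∑ i, Nat.dist (x i) (y i)) x y hxgood hygood hclose le_rfl
  -- follow the walk inside B
  have key : ∀ z, Relation.ReflTransGen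
      (fun a b => a ∈ cube n d \ gridOf n d k w P ∧
        b ∈ cube n d \ gridOf n d k w P ∧ Neighbor a b) y z → z ∈ B := by
    intro z hz
    induction hz with
    | refl => exact hyB
    | tail _ hstep ih => exact hB.2.2.2 _ ih _ hstep.2.1 hstep.2.2
  exact key x hwalk
end

section
/- Let G ∈ G(n,d,k,w) and let (a_1,...,a_d) ∈ [n−k+1]^d. Then the width-k box S = {a_1,...,a_1+k−1} × ... × {a_d,...,a_d+k−1} (the set of entries of the width-k subarray in location (a_1,...,a_d)) intersects exactly one G-block B, and moreover S ⊆ B̄. -/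
open Finset

/-- A valid location of a width-`k` subarray in `[n]^d`: an element of `[n−k+1]^d`. -/
def ValidLoc (n d k : ℕ) (a : Fin d → ℕ) : Prop :=
  ∀ i, 1 ≤ a i ∧ a i ≤ n - k + 1

/-- The width-`k` box with lowest corner `a`: `{a_1,…,a_1+k−1} × ⋯ × {a_d,…,a_d+k−1}`. -/
def kbox (d k : ℕ) (a : Fin d → ℕ) : Set (Fin d → ℕ) :=
  {x | ∀ i, a i ≤ x i ∧ x i ≤ a i + k - 1}

/-- Some forbidden pattern of `F` occurs as a consecutive subarray of `A` at location `a`;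
patterns are compared on `[k]^d`. -/
def HasCopyAt {σ : Type*} (d k : ℕ) (F : Set ((Fin d → ℕ) → σ))
    (A : (Fin d → ℕ) → σ) (a : Fin d → ℕ) : Prop :=
  ∃ S ∈ F, ∀ j : Fin d → ℕ, (∀ i, 1 ≤ j i ∧ j i ≤ k) →
    A (fun i => a i + j i - 1) = S j

/-- `A` contains an `F`-copy lying inside the set `X`. -/
def HasCopyIn {σ : Type*} (n d k : ℕ) (F : Set ((Fin d → ℕ) → σ))
    (A : (Fin d → ℕ) → σ) (X : Set (Fin d → ℕ)) : Prop :=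
  ∃ a, ValidLoc n d k a ∧ HasCopyAt d k F A a ∧ kbox d k a ⊆ X

/-- `A` satisfies the `k`-local property `P(F)`: it contains no `F`-copy. -/
def SatisfiesP {σ : Type*} (n d k : ℕ) (F : Set ((Fin d → ℕ) → σ))
    (A : (Fin d → ℕ) → σ) : Prop :=
  ¬ ∃ a, ValidLoc n d k a ∧ HasCopyAt d k F A a

/-- `A` is `ε`-far from `P(F)`: every array satisfying `P(F)` differs from `A`
in at least `ε·n^d` entries of `[n]^d`. -/
def FarFrom {σ : Type*} (n d k : ℕ) (F : Set ((Fin d → ℕ) → σ)) (ε : ℝ)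
    (A : (Fin d → ℕ) → σ) : Prop :=
  ∀ A' : (Fin d → ℕ) → σ, SatisfiesP n d k F A' →
    ε * (n : ℝ) ^ d ≤ ({x | x ∈ cube n d ∧ A x ≠ A' x}).ncard

/-- A block `B` is `(P,A)`-unrepairable: every array agreeing with `A` on `∂B`
(including `A` itself) contains an `F`-copy lying inside `B̄`. -/
def Unrepairable {σ : Type*} (n d k : ℕ) (F : Set ((Fin d → ℕ) → σ))
    (A : (Fin d → ℕ) → σ) (B : Set (Fin d → ℕ)) : Prop :=
  ∀ A' : (Fin d → ℕ) → σ, (∀ x ∈ blockBoundary n d k B, A' x = A x) →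
    HasCopyIn n d k F A' (blockClosure n d k B)


/-! ### Auxiliary machinery -/

/-- A value is "bad" if it belongs to the first `k-1` elements of some interval. -/
def badv {n w : ℕ} (k : ℕ) (P : IntervalPartition n w) (v : ℕ) : Prop :=
  ∃ j, v ∈ takeSmallest (P.I j) (k - 1)

lemma aux_filter_Icc (a b v : ℕ) :
    (Finset.Icc a b).filter (fun y => y ≤ v) = Finset.Icc a (min b v) := by
  ext x
  simp only [Finset.mem_filter, Finset.mem_Icc]
  omega

lemma aux_mem_takeSmallest {k : ℕ} (hk : 2 ≤ k) (a b v : ℕ) :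
    v ∈ takeSmallest (Finset.Icc a b) (k - 1) ↔ a ≤ v ∧ v ≤ b ∧ v ≤ a + k - 2 := by
  unfold takeSmallest
  rw [Finset.mem_filter, aux_filter_Icc, Finset.mem_Icc, Nat.card_Icc]
  omega

lemma aux_bad_struct {n w : ℕ} (k : ℕ) (hk : 2 ≤ k) (hkw : k ≤ w)
    (P : IntervalPartition n w) {v : ℕ} (hv : badv k P v) :
    ∃ s, s ≤ v ∧ v ≤ s + k - 2 ∧ (∀ u, s ≤ u → u ≤ s + k - 2 → badv k P u) ∧
      ¬ badv k P (s + k - 1) := by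
  obtain ⟨j, hj⟩ := hv
  obtain ⟨a, b, ha1, hab, hbn, hI⟩ := P.interval j
  have hcard := P.size j
  rw [hI, Nat.card_Icc] at hcard
  have hbk : a + k - 1 ≤ b := by omega
  rw [hI, aux_mem_takeSmallest hk] at hj
  refine ⟨a, hj.1, hj.2.2, ?_, ?_⟩
  · intro u h1 h2
    exact ⟨j, by rw [hI, aux_mem_takeSmallest hk]; omega⟩
  · rintro ⟨j', hj'⟩
    have hmem' : a + k - 1 ∈ P.I j' := by
      unfold takeSmallest at hj'
      exact (Finset.mem_filter.mp hj').1
    have hmem : a + k - 1 ∈ P.I j := by rw [hI, Finset.mem_Icc]; omega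
    rcases lt_trichotomy j j' with h | rfl | h
    · exact absurd (P.ordered j j' h _ hmem _ hmem') (lt_irrefl _)
    · rw [hI, aux_mem_takeSmallest hk] at hj'; omega
    · exact absurd (P.ordered j' j h _ hmem' _ hmem) (lt_irrefl _)

lemma aux_good_between {n w : ℕ} (k : ℕ) (hk : 2 ≤ k) (hkw : k ≤ w)
    (P : IntervalPartition n w) {u z v : ℕ} (huz : z ≤ u + k - 1)
    (hu : ¬ badv k P u) (hz : ¬ badv k P z) (h1 : u ≤ v) (h2 : v ≤ z) :
    ¬ badv k P v := by
  intro hv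
  obtain ⟨s, hs1, hs2, hall, -⟩ := aux_bad_struct k hk hkw P hv
  by_cases hc : s ≤ u
  · exact hu (hall u hc (by omega))
  · by_cases hc2 : z ≤ s + k - 2
    · exact hz (hall z (by omega) hc2)
    · omega

lemma aux_exists_good {n w : ℕ} (k : ℕ) (hk : 2 ≤ k) (hkw : k ≤ w)
    (P : IntervalPartition n w) (c : ℕ) :
    ∃ v, c ≤ v ∧ v ≤ c + k - 1 ∧ ¬ badv k P v := by
  by_cases h : badv k P c
  · obtain ⟨s, hs1, hs2, -, hg⟩ := aux_bad_struct k hk hkw P h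
    exact ⟨s + k - 1, by omega, by omega, hg⟩
  · exact ⟨c, le_rfl, by omega, h⟩

lemma aux_mem_NG {n d k w : ℕ} (P : IntervalPartition n w) (x : Fin d → ℕ) :
    x ∈ cube n d \ gridOf n d k w P ↔
      (∀ i, 1 ≤ x i ∧ x i ≤ n) ∧ ∀ i, ¬ badv k P (x i) := by
  constructor
  · rintro ⟨hc, hg⟩
    exact ⟨hc, fun i hb => by obtain ⟨j, hj⟩ := hb; exact hg ⟨hc, i, j, hj⟩⟩
  · rintro ⟨hc, h⟩
    exact ⟨hc, fun hx => by obtain ⟨-, i, j, hj⟩ := hx; exact h i ⟨j, hj⟩⟩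

lemma aux_neighbor_symm {d : ℕ} {x y : Fin d → ℕ} (h : Neighbor x y) :
    Neighbor y x := by
  unfold Neighbor at *
  rw [Finset.sum_congr rfl fun i _ => Nat.dist_comm (y i) (x i)]
  exact h

lemma aux_neighbor_update {d : ℕ} (p : Fin d → ℕ) (i : Fin d) (v : ℕ)
    (h : Nat.dist (p i) v = 1) : Neighbor p (Function.update p i v) := by
  unfold Neighbor
  rw [Finset.sum_eq_single i]
  · simpa using h
  · intro b _ hb
    simp [Function.update_of_ne hb, Nat.dist_self]
  · simp

lemma aux_update_mem {n d k w : ℕ} (P : IntervalPartition n w) (p : Fin d → ℕ)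
    (i : Fin d) (v : ℕ) (hp : p ∈ cube n d \ gridOf n d k w P)
    (h1 : 1 ≤ v) (h2 : v ≤ n) (hg : ¬ badv k P v) :
    Function.update p i v ∈ cube n d \ gridOf n d k w P := by
  rw [aux_mem_NG] at hp ⊢
  constructor
  · intro i'
    rcases eq_or_ne i' i with rfl | h
    · simpa using ⟨h1, h2⟩
    · rw [Function.update_of_ne h]; exact hp.1 i'
  · intro i'
    rcases eq_or_ne i' i with rfl | h
    · simpa using hg
    · rw [Function.update_of_ne h]; exact hp.2 i'

lemma aux_move_up {n d k w : ℕ} (P : IntervalPartition n w) (p : Fin d → ℕ)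
    (i : Fin d) : ∀ m : ℕ, p ∈ cube n d \ gridOf n d k w P →
    (∀ v, p i ≤ v → v ≤ p i + m → ¬ badv k P v) → p i + m ≤ n →
    Relation.ReflTransGen
      (fun a b => a ∈ cube n d \ gridOf n d k w P ∧
        b ∈ cube n d \ gridOf n d k w P ∧ Neighbor a b)
      p (Function.update p i (p i + m)) := by
  intro m
  induction m with
  | zero =>
    intro _ _ _
    simpa using Relation.ReflTransGen.refl
  | succ m ih =>
    intro hp hgood hn
    have h1 := ih hp (fun v a b => hgood v a (by omega)) (by omega)
    have hq : Function.update p i (p i + m) ∈ cube n d \ gridOf n d k w P := by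
      refine aux_update_mem P p i _ hp ?_ (by omega) (hgood _ (by omega) (by omega))
      have := (aux_mem_NG P p).mp hp
      have := (this.1 i).1
      omega
    have hq' : Function.update p i (p i + (m + 1)) ∈ cube n d \ gridOf n d k w P := by
      refine aux_update_mem P p i _ hp ?_ (by omega) (hgood _ (by omega) (by omega))
      omega
    refine h1.tail ⟨hq, hq', ?_⟩
    have hnb := aux_neighbor_update (Function.update p i (p i + m)) i (p i + (m + 1))
      (by rw [Function.update_self]; simp [Nat.dist]; omega)
    rwa [Function.update_idem] at hnb

lemma aux_move_coord {n d k w : ℕ} (P : IntervalPartition n w) (p : Fin d → ℕ)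
    (i : Fin d) (t : ℕ) (hp : p ∈ cube n d \ gridOf n d k w P)
    (ht1 : 1 ≤ t) (ht2 : t ≤ n)
    (hgood : ∀ v, (p i ≤ v ∧ v ≤ t) ∨ (t ≤ v ∧ v ≤ p i) → ¬ badv k P v) :
    Relation.ReflTransGen
      (fun a b => a ∈ cube n d \ gridOf n d k w P ∧
        b ∈ cube n d \ gridOf n d k w P ∧ Neighbor a b)
      p (Function.update p i t) := by
  rcases le_total (p i) t with h | h
  · have := aux_move_up P p i (t - p i) hp
      (fun v h1 h2 => hgood v (Or.inl ⟨h1, by omega⟩)) (by omega)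
    rwa [show p i + (t - p i) = t from by omega] at this
  · have hq : Function.update p i t ∈ cube n d \ gridOf n d k w P :=
      aux_update_mem P p i t hp ht1 ht2 (hgood t (Or.inr ⟨le_rfl, h⟩))
    have h2 := aux_move_up P (Function.update p i t) i (p i - t) hq ?_ ?_
    rotate_left
    · intro v hv1 hv2
      rw [Function.update_self] at hv1 hv2
      exact hgood v (Or.inr ⟨hv1, by omega⟩)
    · rw [Function.update_self]
      have := ((aux_mem_NG P p).mp hp).1 i
      omega
    rw [Function.update_self, Function.update_idem,
      show t + (p i - t) = p i from by omega, Function.update_eq_self] at h2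
    have hsymm : Symmetric (fun a b => a ∈ cube n d \ gridOf n d k w P ∧
        b ∈ cube n d \ gridOf n d k w P ∧ Neighbor a b) :=
      fun a b hab => ⟨hab.2.1, hab.1, aux_neighbor_symm hab.2.2⟩
    exact (@Relation.ReflTransGen.stdSymm _ _ ⟨hsymm⟩).symm _ _ h2

/-- The interpolating path between two points. -/
def zpath {d : ℕ} (x y : Fin d → ℕ) (m : ℕ) : Fin d → ℕ :=
  fun i => if (i : ℕ) < m then y i else x i

lemma aux_box_path {n d k w : ℕ} (hk : 2 ≤ k) (hkw : k ≤ w)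
    (P : IntervalPartition n w) (a x y : Fin d → ℕ)
    (hx : x ∈ cube n d \ gridOf n d k w P) (hy : y ∈ cube n d \ gridOf n d k w P)
    (hxa : x ∈ kbox d k a) (hya : y ∈ kbox d k a) :
    Relation.ReflTransGen
      (fun p q => p ∈ cube n d \ gridOf n d k w P ∧
        q ∈ cube n d \ gridOf n d k w P ∧ Neighbor p q) x y := by
  have hx' := (aux_mem_NG P x).mp hx
  have hy' := (aux_mem_NG P y).mp hy
  have hz : ∀ m, zpath x y m ∈ cube n d \ gridOf n d k w P := by
    intro m
    rw [aux_mem_NG]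
    constructor <;> intro i <;> by_cases h : (i : ℕ) < m <;> simp [zpath, h]
    · exact hy'.1 i
    · exact hx'.1 i
    · exact hy'.2 i
    · exact hx'.2 i
  have key : ∀ m, Relation.ReflTransGen
      (fun p q => p ∈ cube n d \ gridOf n d k w P ∧
        q ∈ cube n d \ gridOf n d k w P ∧ Neighbor p q) x (zpath x y m) := by
    intro m
    induction m with
    | zero =>
      have hz0 : zpath x y 0 = x := funext fun i => by simp [zpath]
      rw [hz0]
    | succ m ih =>
      by_cases hm : m < d
      · set i : Fin d := ⟨m, hm⟩ with hi
        have heq : zpath x y (m + 1) = Function.update (zpath x y m) i (y i) := by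
          funext i'
          rw [Function.update_apply]
          split_ifs with h1
          · subst h1
            simp [zpath, hi]
          · have hne : (i' : ℕ) ≠ m := fun hh => h1 (Fin.ext hh)
            by_cases h2 : (i' : ℕ) < m
            · simp [zpath, h2, show (i' : ℕ) < m + 1 from by omega]
            · simp [zpath, h2, show ¬ (i' : ℕ) < m + 1 from by omega]
        rw [heq]
        refine ih.trans (aux_move_coord P (zpath x y m) i (y i) (hz m)
          (hy'.1 i).1 (hy'.1 i).2 ?_)
        have hpi : zpath x y m i = x i := by simp [zpath, hi]
        rw [hpi]
        intro v hv
        have hb1 := hxa i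
        have hb2 := hya i
        rcases hv with ⟨hv1, hv2⟩ | ⟨hv1, hv2⟩
        · exact aux_good_between k hk hkw P (u := x i) (z := y i)
            (by omega) (hx'.2 i) (hy'.2 i) hv1 hv2
        · exact aux_good_between k hk hkw P (u := y i) (z := x i)
            (by omega) (hy'.2 i) (hx'.2 i) hv1 hv2
      · have : zpath x y (m + 1) = zpath x y m := by
          funext i
          have := i.isLt
          simp [zpath, show (i : ℕ) < m from by omega,
            show (i : ℕ) < m + 1 from by omega]
        rw [this]
        exact ih
  have hzd : zpath x y d = y := funext fun i => by simp [zpath, i.isLt]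
  rw [← hzd]
  exact key d

/-- Any width-`k` box at a valid location intersects exactly one
`G`-block `B`, and is contained in its closure `B̄`. -/
theorem kbox_meets_unique_block (n d k w : ℕ) (hd : 1 ≤ d) (hk : 2 ≤ k)
    (hkw : k ≤ w) (hwn : w ≤ n) (G : Set (Fin d → ℕ)) (hG : IsGrid n d k w G)
    (a : Fin d → ℕ) (ha : ValidLoc n d k a) :
    ∃ B : Set (Fin d → ℕ), IsBlock n d G B ∧ (kbox d k a ∩ B).Nonempty ∧
      kbox d k a ⊆ blockClosure n d k B ∧
      ∀ B' : Set (Fin d → ℕ), IsBlock n d G B' → (kbox d k a ∩ B').Nonempty → B' = B := by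
  obtain ⟨P, rfl⟩ := hG
  have hkn : k ≤ n := le_trans hkw hwn
  -- choose a good point b in the box
  have hbex : ∀ i : Fin d, ∃ v, a i ≤ v ∧ v ≤ a i + k - 1 ∧ ¬ badv k P v :=
    fun i => aux_exists_good k hk hkw P (a i)
  choose b hb1 hb2 hb3 using hbex
  have hbNG : b ∈ cube n d \ gridOf n d k w P := by
    rw [aux_mem_NG]
    refine ⟨fun i => ?_, hb3⟩
    have h1 := (ha i).1
    have h2 := (ha i).2
    constructor <;> [skip; skip] <;> first
      | (have := hb1 i; omega)
      | (have := hb2 i; omega)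
  have hbbox : b ∈ kbox d k a := fun i => ⟨hb1 i, hb2 i⟩
  set R := fun p q => p ∈ cube n d \ gridOf n d k w P ∧
      q ∈ cube n d \ gridOf n d k w P ∧ Neighbor p q with hR
  have hsymm : Symmetric R := fun p q hpq => ⟨hpq.2.1, hpq.1, aux_neighbor_symm hpq.2.2⟩
  set B : Set (Fin d → ℕ) :=
    {y | y ∈ cube n d \ gridOf n d k w P ∧ Relation.ReflTransGen R b y} with hB
  have hbB : b ∈ B := ⟨hbNG, Relation.ReflTransGen.refl⟩
  have hblock : IsBlock n d (gridOf n d k w P) B := by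
    refine ⟨⟨b, hbB⟩, fun y hy => hy.1, ?_, ?_⟩
    · intro p hp q hq
      exact ((@Relation.ReflTransGen.stdSymm _ _ ⟨hsymm⟩).symm _ _ hp.2).trans hq.2
    · intro p hp q hqNG hnb
      exact ⟨hqNG, hp.2.tail ⟨hp.1, hqNG, hnb⟩⟩
  have hclosed : ∀ B' : Set (Fin d → ℕ), IsBlock n d (gridOf n d k w P) B' →
      ∀ p ∈ B', ∀ q, Relation.ReflTransGen R p q → q ∈ B' := by
    intro B' hB' p hp q hpq
    induction hpq with
    | refl => exact hp
    | tail h1 h2 ih => exact hB'.2.2.2 _ ih _ h2.2.1 h2.2.2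
  refine ⟨B, hblock, ⟨b, hbbox, hbB⟩, ?_, ?_⟩
  · intro x hxbox
    refine ⟨fun i => ?_, b, hbB, fun i => ?_⟩
    · have h1 := (ha i).1
      have h2 := (ha i).2
      have h3 := (hxbox i).1
      have h4 := (hxbox i).2
      constructor <;> omega
    · have h3 := (hxbox i).1
      have h4 := (hxbox i).2
      have h5 := hb1 i
      have h6 := hb2 i
      simp only [Nat.dist]
      omega
  · intro B' hB' ⟨x, hxbox, hxB'⟩
    have hxNG : x ∈ cube n d \ gridOf n d k w P := hB'.2.1 hxB'
    have hpath : Relation.ReflTransGen R x b :=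
      aux_box_path hk hkw P a x b hxNG hbNG hxbox hbbox
    have hbB' : b ∈ B' := hclosed B' hB' x hxB' b hpath
    ext y
    constructor
    · intro hy
      exact ⟨hB'.2.1 hy, hB'.2.2.1 b hbB' y hy⟩
    · intro hy
      exact hclosed B' hB' b hbB' y hy.2
end

section
/- For all integers d ≥ 1 and 2 ≤ k ≤ w ≤ n, an (n,d,k,w)-system of grids exists. -/
open Finset

/-- `r = ⌊log₂(n/w)⌋`. -/
def sysR (n w : ℕ) : ℕ := Nat.log 2 (n / w)

/-- An `(n,d,k,w)`-system of grids `(G_0, …, G_r)` with `r = ⌊log₂(n/w)⌋`: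
`G_i ∈ 𝒢(n,d,k,⌊n/2^(r−i)⌋)` and `G_0 ⊇ G_1 ⊇ ⋯ ⊇ G_r`. -/
structure GridSystem (n d k w : ℕ) where
  G : ℕ → Set (Fin d → ℕ)
  isGrid : ∀ i ≤ sysR n w, IsGrid n d k (n / 2 ^ (sysR n w - i)) (G i)
  nested : ∀ i j : ℕ, j ≤ i → i ≤ sysR n w → G i ⊆ G j

/-- A `G_i`-block `B` is a `(P,A)`-witness: either `i = 0` and `A` contains an `F`-copy
inside `B̄`, or `i > 0` and `B` is `(P,A)`-unrepairable. -/
def IsWitness {σ : Type*} (n d k w : ℕ) (S : GridSystem n d k w)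
    (F : Set ((Fin d → ℕ) → σ)) (A : (Fin d → ℕ) → σ)
    (i : ℕ) (B : Set (Fin d → ℕ)) : Prop :=
  i ≤ sysR n w ∧ IsBlock n d (S.G i) B ∧
    ((i = 0 ∧ HasCopyIn n d k F A (blockClosure n d k B)) ∨
      (0 < i ∧ Unrepairable n d k F A B))

/-- A witness is maximal if all of its ancestors (blocks of coarser grids containing it)
are `(P,A)`-repairable. -/
def IsMaximalWitness {σ : Type*} (n d k w : ℕ) (S : GridSystem n d k w)
    (F : Set ((Fin d → ℕ) → σ)) (A : (Fin d → ℕ) → σ)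
    (i : ℕ) (B : Set (Fin d → ℕ)) : Prop :=
  IsWitness n d k w S F A i B ∧
    ∀ j, i < j → j ≤ sysR n w → ∀ B', IsBlock n d (S.G j) B' → B ⊆ B' →
      ¬ Unrepairable n d k F A B'

/-- The family `W` of all maximal `(P,A)`-witness blocks. -/
def MaxWitnessFamily {σ : Type*} (n d k w : ℕ) (S : GridSystem n d k w)
    (F : Set ((Fin d → ℕ) → σ)) (A : (Fin d → ℕ) → σ) :
    Set (Set (Fin d → ℕ)) :=
  {B | ∃ i, IsMaximalWitness n d k w S F A i B}

/-- `Par(B)` for a `G_i`-block `B`: the `G_{i+1}`-block containing `B` if `i < r`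
(expressed as the union of all such blocks, of which there is exactly one), and
`[n]^d` for `i = r`. -/
def parentSet (n d k w : ℕ) (S : GridSystem n d k w) (i : ℕ)
    (B : Set (Fin d → ℕ)) : Set (Fin d → ℕ) :=
  if i = sysR n w then cube n d
  else ⋃₀ {B' | IsBlock n d (S.G (i + 1)) B' ∧ B ⊆ B'}

/-! ### Auxiliary construction: dyadic interval partitions -/

lemma myDivAddDiv (a b c : ℕ) (hc : 0 < c) : a / c + b / c ≤ (a + b) / c := by
  rw [Nat.le_div_iff_mul_le hc, Nat.add_mul]
  exact Nat.add_le_add (Nat.div_mul_le_self a c) (Nat.div_mul_le_self b c)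

lemma myAddDiv (a b c : ℕ) (hc : 0 < c) : (a + b) / c ≤ a / c + b / c + 1 := by
  rw [Nat.add_div hc]; split <;> omega

lemma takeSmallest_Icc_s7 (c e ℓ : ℕ) (h : c + ℓ ≤ e) :
    takeSmallest (Finset.Icc (c + 1) e) ℓ = Finset.Icc (c + 1) (c + ℓ) := by
  unfold takeSmallest
  ext x
  simp only [Finset.mem_filter, Finset.mem_Icc]
  have hfil : ∀ x, x ≤ e → (Finset.Icc (c + 1) e).filter (fun y => y ≤ x)
      = Finset.Icc (c + 1) x := by
    intro x hx
    ext y; simp only [Finset.mem_filter, Finset.mem_Icc]; omega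
  constructor
  · rintro ⟨⟨h1, h2⟩, hcard⟩
    rw [hfil x h2, Nat.card_Icc] at hcard
    omega
  · rintro ⟨h1, h2⟩
    have hx : x ≤ e := by omega
    refine ⟨⟨h1, hx⟩, ?_⟩
    rw [hfil x hx, Nat.card_Icc]; omega

/-- The dyadic `(n, ⌊n/2^m⌋)`-interval partition with breakpoints `⌊a·n/2^m⌋`. -/
def ipart (n m : ℕ) (h : 1 ≤ n / 2 ^ m) : IntervalPartition n (n / 2 ^ m) where
  t := 2 ^ m
  I := fun a => Finset.Icc (a.1 * n / 2 ^ m + 1) ((a.1 + 1) * n / 2 ^ m)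
  interval := by
    intro a
    have hc : 0 < 2 ^ m := Nat.pow_pos (by norm_num : 0 < 2)
    refine ⟨a.1 * n / 2 ^ m + 1, (a.1 + 1) * n / 2 ^ m, Nat.le_add_left 1 _, ?_, ?_, rfl⟩
    · have := myDivAddDiv (a.1 * n) n (2 ^ m) hc
      rw [show a.1 * n + n = (a.1 + 1) * n by ring] at this
      omega
    · calc (a.1 + 1) * n / 2 ^ m ≤ 2 ^ m * n / 2 ^ m :=
            Nat.div_le_div_right (Nat.mul_le_mul_right n a.2)
        _ = n := by rw [Nat.mul_div_cancel_left n hc]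
  size := by
    intro a
    have hc : 0 < 2 ^ m := Nat.pow_pos (by norm_num : 0 < 2)
    have h1 := myDivAddDiv (a.1 * n) n (2 ^ m) hc
    have h2 := myAddDiv (a.1 * n) n (2 ^ m) hc
    rw [show a.1 * n + n = (a.1 + 1) * n by ring] at h1 h2
    rw [Nat.card_Icc]
    omega
  cover := by
    intro x hx
    have hc : 0 < 2 ^ m := Nat.pow_pos (by norm_num : 0 < 2)
    rw [Finset.mem_Icc] at hx
    have hn : 0 < n := Nat.pos_of_ne_zero (by rintro rfl; simp at h)
    set a := (x * 2 ^ m - 1) / n with ha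
    have hxpos : 1 ≤ x * 2 ^ m := Nat.one_le_iff_ne_zero.2
      (Nat.mul_ne_zero (by omega) (by positivity))
    have halt : a < 2 ^ m := by
      rw [ha, Nat.div_lt_iff_lt_mul hn]
      have h5 : x * 2 ^ m ≤ 2 ^ m * n := by
        rw [mul_comm (2 ^ m) n]; exact Nat.mul_le_mul_right _ hx.2
      omega
    have hb1 : a * n / 2 ^ m + 1 ≤ x := by
      have h1 : a * n ≤ x * 2 ^ m - 1 := Nat.div_mul_le_self _ _
      have h2 : a * n / 2 ^ m ≤ (x * 2 ^ m - 1) / 2 ^ m :=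
        Nat.div_le_div_right h1
      have h3 : (x * 2 ^ m - 1) / 2 ^ m = x - 1 := by
        have he : x * 2 ^ m - 1 = (2 ^ m - 1) + (x - 1) * 2 ^ m := by
          cases x with
          | zero => omega
          | succ y => rw [Nat.succ_sub_one]; ring_nf; omega
        rw [he, Nat.add_mul_div_right _ _ hc, Nat.div_eq_of_lt (by omega)]
        omega
      omega
    have hb2 : x ≤ (a + 1) * n / 2 ^ m := by
      rw [Nat.le_div_iff_mul_le hc]
      have hdm := Nat.div_add_mod (x * 2 ^ m - 1) n
      have hmod := Nat.mod_lt (x * 2 ^ m - 1) hn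
      rw [← ha] at hdm
      have e1 : (a + 1) * n = n * a + n := by ring
      rw [e1]
      omega
    exact ⟨⟨a, halt⟩, Finset.mem_Icc.2 ⟨hb1, hb2⟩⟩
  ordered := by
    intro j j' hjj x hxmem y hymem
    have hc : 0 < 2 ^ m := Nat.pow_pos (by norm_num : 0 < 2)
    rw [Finset.mem_Icc] at hxmem hymem
    have hmono : (j.1 + 1) * n / 2 ^ m ≤ j'.1 * n / 2 ^ m :=
      Nat.div_le_div_right (Nat.mul_le_mul_right n hjj)
    omega

lemma takeSmallest_ipart (n m k : ℕ) (hk : 1 ≤ k) (hkW : k ≤ n / 2 ^ m)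
    (h : 1 ≤ n / 2 ^ m) (a : Fin ((ipart n m h).t)) :
    takeSmallest ((ipart n m h).I a) (k - 1)
      = Finset.Icc (a.1 * n / 2 ^ m + 1) (a.1 * n / 2 ^ m + (k - 1)) := by
  have hc : 0 < 2 ^ m := Nat.pow_pos (by norm_num : 0 < 2)
  have h1 := myDivAddDiv (a.1 * n) n (2 ^ m) hc
  rw [show a.1 * n + n = (a.1 + 1) * n by ring] at h1
  show takeSmallest (Finset.Icc (a.1 * n / 2 ^ m + 1) ((a.1 + 1) * n / 2 ^ m)) (k - 1) = _
  exact takeSmallest_Icc_s7 _ _ _ (by omega)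

lemma grid_nested (n d k m m' : ℕ) (hmm : m ≤ m') (hk : 1 ≤ k)
    (hW : k ≤ n / 2 ^ m') (h : 1 ≤ n / 2 ^ m) (h' : 1 ≤ n / 2 ^ m') :
    gridOf n d k (n / 2 ^ m) (ipart n m h) ⊆ gridOf n d k (n / 2 ^ m') (ipart n m' h') := by
  have hc : 0 < 2 ^ m := Nat.pow_pos (by norm_num : 0 < 2)
  have hc' : 0 < 2 ^ m' := Nat.pow_pos (by norm_num : 0 < 2)
  have hdiv : n / 2 ^ m' ≤ n / 2 ^ m :=
    Nat.div_le_div_left (Nat.pow_le_pow_right (by norm_num) hmm) hc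
  have hWm : k ≤ n / 2 ^ m := le_trans hW hdiv
  rintro x ⟨hcube, i, a, hxa⟩
  have ha' : a.1 * 2 ^ (m' - m) < 2 ^ m' := by
    calc a.1 * 2 ^ (m' - m) < 2 ^ m * 2 ^ (m' - m) :=
          mul_lt_mul_of_pos_right a.2 (Nat.pow_pos (by norm_num : 0 < 2))
      _ = 2 ^ m' := by rw [← pow_add]; congr 1; omega
  refine ⟨hcube, i, ⟨a.1 * 2 ^ (m' - m), ha'⟩, ?_⟩
  have hbpt : (a.1 * 2 ^ (m' - m)) * n / 2 ^ m' = a.1 * n / 2 ^ m := by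
    have h2 : (2 : ℕ) ^ m' = 2 ^ (m' - m) * 2 ^ m := by rw [← pow_add]; congr 1; omega
    rw [h2, show a.1 * 2 ^ (m' - m) * n = 2 ^ (m' - m) * (a.1 * n) by ring,
      Nat.mul_div_mul_left _ _ (Nat.pow_pos (by norm_num : 0 < 2))]
  rw [takeSmallest_ipart n m' k hk hW h' ⟨a.1 * 2 ^ (m' - m), ha'⟩]
  rw [takeSmallest_ipart n m k hk hWm h a] at hxa
  simpa only [Fin.val_mk, hbpt] using hxa

/-- For all integers `d ≥ 1` and `2 ≤ k ≤ w ≤ n`, an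
`(n,d,k,w)`-system of grids exists. -/
theorem gridSystem_exists (n d k w : ℕ) (hd : 1 ≤ d) (hk : 2 ≤ k)
    (hkw : k ≤ w) (hwn : w ≤ n) :
    Nonempty (GridSystem n d k w) := by
  have hc : ∀ m : ℕ, (0:ℕ) < 2 ^ m := fun m => Nat.pow_pos (by norm_num : 0 < 2)
  set r := sysR n w with hr
  have hnw : 1 ≤ n / w := Nat.one_le_div_iff (by omega) |>.2 hwn
  have h2r : 2 ^ r ≤ n / w := Nat.pow_log_le_self 2 (by omega)
  have hwr : w ≤ n / 2 ^ r := by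
    rw [Nat.le_div_iff_mul_le (hc r)]
    calc w * 2 ^ r ≤ w * (n / w) := Nat.mul_le_mul_left w h2r
      _ ≤ n := Nat.mul_div_le n w
  have hkey : ∀ m : ℕ, m ≤ r → k ≤ n / 2 ^ m := fun m hm =>
    le_trans (le_trans hkw hwr)
      (Nat.div_le_div_left (Nat.pow_le_pow_right (by norm_num) hm) (hc m))
  have hh : ∀ i : ℕ, 1 ≤ n / 2 ^ (r - i) := fun i =>
    le_trans (by omega) (hkey (r - i) (Nat.sub_le r i))
  refine ⟨⟨fun i => gridOf n d k (n / 2 ^ (r - i)) (ipart n (r - i) (hh i)), ?_, ?_⟩⟩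
  · intro i _
    exact ⟨ipart n (r - i) (hh i), rfl⟩
  · intro i j hji hir
    exact grid_nested n d k (r - i) (r - j) (Nat.sub_le_sub_left hji r) (by omega)
      (hkey (r - j) (Nat.sub_le r j)) (hh i) (hh j)
end
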